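/- Take X = [0,∞), F(x) = x, g(x,s) = s+2, h(s) = s−2, and f(x,s) = (s+2)·1[x ≥ s] + (s−2)·1[0 ≤ x < s]. Then the class 𝓕 = {f(·,s) : s ∈ ℝ} has VC-subgraph dimension exactly 3; in particular the three points (11/4, 9/4), (15/4, 13/4), (25/4, 21/4) in [0,∞) × ℝ are shattered by the subgraphs of 𝓕. -/
import Mathlib


/-- Shattering via subgraphs. -/
def ShattersSubgraphs {X : Type*} (𝓕 : Set (X → ℝ)) {n : ℕ} (p : Fin n → X × ℝ) : Prop :=
  ∀ I : Finset (Fin n), ∃ f ∈ 𝓕, ∀ i : Fin n, ((p i).2 < f (p i).1 ↔ i ∈ I)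

/-- The concrete function `f(x,s) = (s+2)·1[x ≥ s] + (s−2)·1[0 ≤ x < s]` on `X = [0,∞)`. -/
noncomputable def fEx (s : ℝ) (x : {x : ℝ // 0 ≤ x}) : ℝ :=
  (s + 2) * (if s ≤ (x : ℝ) then 1 else 0) + (s - 2) * (if (x : ℝ) < s then 1 else 0)

lemma fEx_lt_iff (s t : ℝ) (x : {x : ℝ // 0 ≤ x}) :
    t < fEx s x ↔ (t - 2 < s ∧ (s ≤ (x : ℝ) ∨ t + 2 < s)) := by
  unfold fEx
  by_cases h : s ≤ (x : ℝ)
  · rw [if_pos h, if_neg (not_lt.2 h)]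
    constructor
    · intro h'; exact ⟨by linarith, Or.inl h⟩
    · rintro ⟨h1, _⟩; linarith
  · rw [if_neg h, if_pos (lt_of_not_ge h)]
    push_neg at h
    constructor
    · intro h'; exact ⟨by linarith, Or.inr (by linarith)⟩
    · rintro ⟨h1, h2 | h3⟩
      · linarith
      · linarith

lemma no_four (p : Fin 4 → {x : ℝ // 0 ≤ x} × ℝ) :
    ¬ ShattersSubgraphs (Set.range fun s => fun x => fEx s x) p := by
  intro hp
  have hp' : ∀ I : Finset (Fin 4), ∃ s : ℝ,
      ∀ i, ((p i).2 < fEx s (p i).1 ↔ i ∈ I) := by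
    intro I
    obtain ⟨f, ⟨s, rfl⟩, h⟩ := hp I
    exact ⟨s, h⟩
  choose σ hσ using hp'
  set B : Finset ℝ := Finset.univ.biUnion
    (fun i : Fin 4 => {(p i).2 - 2, ((p i).1 : ℝ), (p i).2 + 2}) with hB
  have hBmem : ∀ i : Fin 4, (p i).2 - 2 ∈ B ∧ ((p i).1 : ℝ) ∈ B ∧ (p i).2 + 2 ∈ B := by
    intro i
    refine ⟨?_, ?_, ?_⟩ <;>
    · rw [hB]
      refine Finset.mem_biUnion.2 ⟨i, Finset.mem_univ _, ?_⟩
      simp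
  have hBcard : B.card ≤ 12 := by
    have h3 : ∀ i : Fin 4, ({(p i).2 - 2, ((p i).1 : ℝ), (p i).2 + 2} : Finset ℝ).card ≤ 3 := by
      intro i
      refine le_trans (Finset.card_insert_le _ _) (Nat.succ_le_succ ?_)
      refine le_trans (Finset.card_insert_le _ _) (Nat.succ_le_succ ?_)
      simp
    calc B.card ≤ ∑ i : Fin 4, ({(p i).2 - 2, ((p i).1 : ℝ), (p i).2 + 2} : Finset ℝ).card :=
          Finset.card_biUnion_le
      _ ≤ ∑ _i : Fin 4, 3 := Finset.sum_le_sum (fun i _ => h3 i)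
      _ = 12 := by simp
  classical
  set c : ℝ → ℕ := fun s => (B.filter (fun b => b < s)).card with hc
  have hcle : ∀ s, c s ≤ 12 := fun s => le_trans (Finset.card_filter_le _ _) hBcard
  have cmono : ∀ s s' b, b ∈ B → s ≤ b → b < s' → c s < c s' := by
    intro s s' b hb hsb hbs'
    apply Finset.card_lt_card
    constructor
    · intro y hy
      rw [Finset.mem_filter] at hy ⊢
      exact ⟨hy.1, lt_of_lt_of_le hy.2 (le_trans hsb hbs'.le)⟩
    · intro hsub
      have : b ∈ B.filter (fun b => b < s) := hsub (Finset.mem_filter.2 ⟨hb, hbs'⟩)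
      rw [Finset.mem_filter] at this
      exact absurd this.2 (not_lt.2 hsb)
  have key : ∀ I J : Finset (Fin 4), c (σ I) = c (σ J) → I = J := by
    intro I J hcc
    by_contra hIJ
    have : ∃ i : Fin 4, ¬ (i ∈ I ↔ i ∈ J) := by
      by_contra h
      push_neg at h
      exact hIJ (Finset.ext fun i => (h i))
    obtain ⟨i, hi⟩ := this
    have h1 := (hσ I i)
    have h2 := (hσ J i)
    rw [fEx_lt_iff] at h1 h2
    -- the three comparisons must not all agree
    have hdiff : ∃ b ∈ B, ¬ ((b < σ I) ↔ (b < σ J)) := by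
      by_contra h
      push_neg at h
      have e1 := h _ (hBmem i).1
      have e2 := h _ (hBmem i).2.1
      have e3 := h _ (hBmem i).2.2
      apply hi
      rw [← h1, ← h2]
      constructor
      · rintro ⟨ha, hb⟩
        refine ⟨e1.1 ha, ?_⟩
        rcases hb with hb | hb
        · exact Or.inl (not_lt.1 (fun hlt => (not_lt.2 hb) (e2.2 hlt)))
        · exact Or.inr (e3.1 hb)
      · rintro ⟨ha, hb⟩
        refine ⟨e1.2 ha, ?_⟩
        rcases hb with hb | hb
        · exact Or.inl (not_lt.1 (fun hlt => (not_lt.2 hb) (e2.1 hlt)))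
        · exact Or.inr (e3.2 hb)
    obtain ⟨b, hbB, hbne⟩ := hdiff
    rcases lt_or_ge b (σ I) with hlt | hle
    · have : ¬ b < σ J := fun h => hbne ⟨fun _ => h, fun _ => hlt⟩
      have := cmono (σ J) (σ I) b hbB (not_lt.1 this) hlt
      omega
    · have hlt : b < σ J := by
        by_contra h
        exact hbne ⟨fun h' => absurd h' (not_lt.2 hle), fun h' => absurd h' h⟩
      have := cmono (σ I) (σ J) b hbB hle hlt
      omega
  have hinj : Function.Injective (fun I : Finset (Fin 4) =>
      (⟨c (σ I), Nat.lt_succ_of_le (hcle _)⟩ : Fin 13)) := by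
    intro I J h
    exact key I J (by simpa using congrArg Fin.val h)
  have := Fintype.card_le_of_injective _ hinj
  simp [Fintype.card_finset] at this

/-- The class `{f(·,s)}` has VC-subgraph dimension exactly 3: the three given points are
shattered, and no four points can be shattered. -/
theorem stmt1 :
    ShattersSubgraphs (Set.range fun s => fun x => fEx s x)
      (![((⟨11/4, by norm_num⟩ : {x : ℝ // 0 ≤ x}), (9/4 : ℝ)),
         (⟨15/4, by norm_num⟩, 13/4),
         (⟨25/4, by norm_num⟩, 21/4)]) ∧
    ∀ p : Fin 4 → {x : ℝ // 0 ≤ x} × ℝ,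
      ¬ ShattersSubgraphs (Set.range fun s => fun x => fEx s x) p := by
  constructor
  · intro I
    by_cases h0 : (0 : Fin 3) ∈ I <;> by_cases h1 : (1 : Fin 3) ∈ I <;>
      by_cases h2 : (2 : Fin 3) ∈ I
    · exact ⟨_, ⟨(6 : ℝ), rfl⟩, by intro i; fin_cases i <;>
        simp [fEx_lt_iff, h0, h1, h2] <;> norm_num⟩
    · exact ⟨_, ⟨(2 : ℝ), rfl⟩, by intro i; fin_cases i <;>
        simp [fEx_lt_iff, h0, h1, h2] <;> norm_num⟩
    · exact ⟨_, ⟨(5 : ℝ), rfl⟩, by intro i; fin_cases i <;>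
        simp [fEx_lt_iff, h0, h1, h2] <;> norm_num⟩
    · exact ⟨_, ⟨(1 : ℝ), rfl⟩, by intro i; fin_cases i <;>
        simp [fEx_lt_iff, h0, h1, h2] <;> norm_num⟩
    · exact ⟨_, ⟨(7/2 : ℝ), rfl⟩, by intro i; fin_cases i <;>
        simp [fEx_lt_iff, h0, h1, h2] <;> norm_num⟩
    · exact ⟨_, ⟨(3 : ℝ), rfl⟩, by intro i; fin_cases i <;>
        simp [fEx_lt_iff, h0, h1, h2] <;> norm_num⟩
    · exact ⟨_, ⟨(4 : ℝ), rfl⟩, by intro i; fin_cases i <;>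
        simp [fEx_lt_iff, h0, h1, h2] <;> norm_num⟩
    · exact ⟨_, ⟨(0 : ℝ), rfl⟩, by intro i; fin_cases i <;>
        simp [fEx_lt_iff, h0, h1, h2] <;> norm_num⟩
  · exact no_four
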